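/- arXiv:2403.05120 — 4 statements merged into one kernel-verified Lean document; each statement's English description precedes it below -/
import Mathlib

section
/- If G is a connected graph with at least 2 vertices having a universal vertex, then the mutual-visibility number of the double graph D(G) equals 2n(G) − 1. -/
open SimpleGraph

variable {V : Type*}

/-- A walk is a shortest path if it is a path and its length equals the distance
between its endpoints. -/
def SimpleGraph.IsShortestPath (G : SimpleGraph V) {u v : V} (p : G.Walk u v) : Prop :=
  p.IsPath ∧ p.length = G.dist u v

/-- `S` is a general position set: no three vertices of `S` lie on a common shortest path. -/
def SimpleGraph.IsGPSet (G : SimpleGraph V) (S : Set V) : Prop :=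
  ∀ ⦃u v : V⦄ (p : G.Walk u v), G.IsShortestPath p →
    ∀ x ∈ S, ∀ y ∈ S, ∀ z ∈ S, x ≠ y → x ≠ z → y ≠ z →
      ¬ (x ∈ p.support ∧ y ∈ p.support ∧ z ∈ p.support)

/-- `u` and `v` are `S`-visible: some shortest `u,v`-path has no internal vertex in `S`. -/
def SimpleGraph.SVisible (G : SimpleGraph V) (S : Set V) (u v : V) : Prop :=
  ∃ p : G.Walk u v, G.IsShortestPath p ∧ ∀ w ∈ p.support, w ≠ u → w ≠ v → w ∉ S

/-- `S` is a mutual-visibility set. -/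
def SimpleGraph.IsMVSet (G : SimpleGraph V) (S : Set V) : Prop :=
  ∀ u ∈ S, ∀ v ∈ S, u ≠ v → G.SVisible S u v

/-- `S` is a total mutual-visibility set. -/
def SimpleGraph.IsTotalMVSet (G : SimpleGraph V) (S : Set V) : Prop :=
  ∀ u v : V, u ≠ v → G.SVisible S u v

/-- `S` is an outer mutual-visibility set. -/
def SimpleGraph.IsOuterMVSet (G : SimpleGraph V) (S : Set V) : Prop :=
  G.IsMVSet S ∧ ∀ u ∈ S, ∀ v ∉ S, u ≠ v → G.SVisible S u v

/-- The mutual-visibility number `μ(G)`. -/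
noncomputable def SimpleGraph.mutualVisibilityNumber (G : SimpleGraph V) [Fintype V] : ℕ :=
  sSup {k | ∃ S : Finset V, G.IsMVSet ↑S ∧ S.card = k}

/-- The total mutual-visibility number `μ_t(G)`. -/
noncomputable def SimpleGraph.totalMutualVisibilityNumber (G : SimpleGraph V) [Fintype V] : ℕ :=
  sSup {k | ∃ S : Finset V, G.IsTotalMVSet ↑S ∧ S.card = k}

/-- The outer mutual-visibility number `μ_o(G)`. -/
noncomputable def SimpleGraph.outerMutualVisibilityNumber (G : SimpleGraph V) [Fintype V] : ℕ :=
  sSup {k | ∃ S : Finset V, G.IsOuterMVSet ↑S ∧ S.card = k}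

/-- The general position number `gp(G)`. -/
noncomputable def SimpleGraph.gpNumber (G : SimpleGraph V) [Fintype V] : ℕ :=
  sSup {k | ∃ S : Finset V, G.IsGPSet ↑S ∧ S.card = k}

/-- The double graph `D(G)`: two copies of each vertex, `(u, b)` adjacent to `(v, c)`
iff `u` adjacent to `v` in `G`. -/
def SimpleGraph.doubleGraph (G : SimpleGraph V) : SimpleGraph (V × Bool) where
  Adj x y := G.Adj x.1 y.1
  symm := ⟨fun _ _ h => G.adj_symm h⟩
  loopless := ⟨fun x h => G.irrefl (v := x.1) h⟩

/-- The Mycielskian `M(G)`: `some (u, false)` are the original vertices, `some (u, true)`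
their copies, and `none` is the apex vertex `v*`. -/
def SimpleGraph.mycielskian (G : SimpleGraph V) : SimpleGraph (Option (V × Bool)) where
  Adj x y := match x, y with
    | some (u, false), some (v, false) => G.Adj u v
    | some (u, false), some (v, true) => G.Adj u v
    | some (u, true), some (v, false) => G.Adj u v
    | some (_, true), none => True
    | none, some (_, true) => True
    | _, _ => False
  symm := by
    constructor
    rintro (_ | ⟨u, (_|_)⟩) (_ | ⟨v, (_|_)⟩) h <;>
      first
        | exact h
        | exact G.adj_symm h
  loopless := by
    constructor
    rintro (_ | ⟨u, (_|_)⟩) h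
    · exact h
    · exact G.irrefl h
    · exact h


theorem mu_double_universal [Fintype V] (G : SimpleGraph V) (hconn : G.Connected)
    (hn : 2 ≤ Fintype.card V) (huniv : ∃ v : V, ∀ w : V, w ≠ v → G.Adj v w) :
    G.doubleGraph.mutualVisibilityNumber = 2 * Fintype.card V - 1 := by
  classical
  obtain ⟨v, hv⟩ := huniv
  set D := G.doubleGraph with hD
  -- upper bound: any MV finset has card ≤ 2n - 1
  have hub : ∀ S : Finset (V × Bool), D.IsMVSet ↑S → S.card ≤ 2 * Fintype.card V - 1 := by
    intro S hS
    have hcard2n : Fintype.card (V × Bool) = 2 * Fintype.card V := by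
      simp [Fintype.card_prod, Fintype.card_bool]; ring
    by_contra hlt
    push_neg at hlt
    have hle : S.card ≤ 2 * Fintype.card V := by
      simpa [hcard2n] using S.card_le_univ
    have hScard : S.card = 2 * Fintype.card V := by omega
    have hSuniv : S = Finset.univ := Finset.eq_univ_of_card S (by rw [hScard, hcard2n])
    have hne : ((v, false) : V × Bool) ≠ (v, true) := by simp
    obtain ⟨p, ⟨hp, hlen⟩, hint⟩ :=
      hS (v, false) (by simp [hSuniv]) (v, true) (by simp [hSuniv]) hne
    rcases p with _ | ⟨h1, q⟩
    rcases q with _ | ⟨h2, r⟩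
    · exact G.irrefl (v := v) h1
    · rename_i x y
      have hx : x ∈ (SimpleGraph.Walk.cons h1 (SimpleGraph.Walk.cons h2 r)).support := by
        simp
      have hxa : x ≠ (v, false) := fun h => (D.irrefl (v := (v, false)) (h ▸ h1))
      have hxc : x ≠ (v, true) := by
        intro h
        subst h
        have := D.dist_le (SimpleGraph.Walk.cons h1 SimpleGraph.Walk.nil)
        simp only [SimpleGraph.Walk.length_cons, SimpleGraph.Walk.length_nil] at this hlen
        omega
      exact hint x hx hxa hxc (by simp [hSuniv])
  -- the witness set
  have hvS : ((v, true) : V × Bool) ∈ (Finset.univ : Finset (V × Bool)) := Finset.mem_univ _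
  set S : Finset (V × Bool) := Finset.univ.erase (v, true) with hSdef
  have hScard : S.card = 2 * Fintype.card V - 1 := by
    rw [hSdef, Finset.card_erase_of_mem hvS, Finset.card_univ,
      Fintype.card_prod, Fintype.card_bool]
    omega
  have hmem : ∀ a : V × Bool, a ∈ S ↔ a ≠ (v, true) := by
    intro a; simp [hSdef]
  have hSMV : D.IsMVSet ↑S := by
    intro a ha c hc hac
    have ha2 := (hmem _).mp (Finset.mem_coe.mp ha)
    have hc2 := (hmem _).mp (Finset.mem_coe.mp hc)
    obtain ⟨u, b⟩ := a
    obtain ⟨w, d⟩ := c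
    by_cases hadj : G.Adj u w
    · -- adjacent: path of length 1
      have hadj' : D.Adj (u, b) (w, d) := hadj
      refine ⟨SimpleGraph.Walk.cons hadj' SimpleGraph.Walk.nil, ⟨?_, ?_⟩, ?_⟩
      · simp [SimpleGraph.Walk.isPath_def, hac]
      · simp [SimpleGraph.dist_eq_one_iff_adj.mpr hadj']
      · intro x hx hx1 hx2
        simp only [SimpleGraph.Walk.support_cons, SimpleGraph.Walk.support_nil,
          List.mem_cons, List.mem_singleton] at hx
        rcases hx with h | h | h
        · exact absurd h hx1
        · exact absurd h hx2
        · simp at h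
    · -- not adjacent: path of length 2 through (v, true)
      have huv : u ≠ v := by
        intro h; subst h
        by_cases hw : w = u
        · subst hw
          rcases b with _ | _ <;> rcases d with _ | _ <;> simp_all
        · exact hadj (hv w hw)
      have hwv : w ≠ v := by
        intro h; subst h
        exact hadj ((hv u huv).symm)
      have h1 : D.Adj (u, b) (v, true) := (hv u huv).symm
      have h2 : D.Adj (v, true) (w, d) := hv w hwv
      refine ⟨SimpleGraph.Walk.cons h1 (SimpleGraph.Walk.cons h2 SimpleGraph.Walk.nil),
        ⟨?_, ?_⟩, ?_⟩
      · have hne1 : ((u, b) : V × Bool) ≠ (v, true) := by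
          intro h; exact ha2 (by simp [h])
        have hne2 : ((w, d) : V × Bool) ≠ (v, true) := by
          intro h; exact hc2 (by simp [h])
        simp [SimpleGraph.Walk.isPath_def, hac, hne1, hne2, Ne.symm hne2]
      · have hd2 : D.dist (u, b) (w, d) ≤ 2 := by
          have := D.dist_le (SimpleGraph.Walk.cons h1
            (SimpleGraph.Walk.cons h2 SimpleGraph.Walk.nil))
          simpa using this
        have hd0 : D.dist (u, b) (w, d) ≠ 0 := by
          have hr : D.Reachable (u, b) (w, d) :=
            (SimpleGraph.Walk.cons h1 (SimpleGraph.Walk.cons h2 SimpleGraph.Walk.nil)).reachable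
          intro h
          exact hac (hr.dist_eq_zero_iff.mp h)
        have hd1 : D.dist (u, b) (w, d) ≠ 1 := by
          intro h
          exact hadj ((SimpleGraph.dist_eq_one_iff_adj (G := D)).mp h)
        simp only [SimpleGraph.Walk.length_cons, SimpleGraph.Walk.length_nil]
        omega
      · intro x hx hx1 hx2
        simp only [SimpleGraph.Walk.support_cons, SimpleGraph.Walk.support_nil,
          List.mem_cons, List.mem_singleton] at hx
        rcases hx with h | h | h | h
        · exact absurd h hx1
        · subst h; simp [hSdef]
        · exact absurd h hx2
        · simp at h
  -- combine
  apply le_antisymm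
  · apply csSup_le
    · exact ⟨0, ⟨∅, by intro a ha; simp at ha, by simp⟩⟩
    · rintro k ⟨T, hT, rfl⟩
      exact hub T hT
  · apply le_csSup
    · refine ⟨2 * Fintype.card V - 1, ?_⟩
      rintro k ⟨T, hT, rfl⟩
      exact hub T hT
    · exact ⟨S, hSMV, hScard⟩
end

section
/- For every n ≥ 3, the mutual-visibility number of the double graph of the path P_n equals n + 2. -/
open SimpleGraph

variable {V : Type*}

namespace DPHelp
open SimpleGraph Finset

variable {n : ℕ}

abbrev DG (n : ℕ) := (SimpleGraph.pathGraph n).doubleGraph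

lemma dg_adj {x y : Fin n × Bool} :
    (DG n).Adj x y ↔ (x.1.val + 1 = y.1.val ∨ y.1.val + 1 = x.1.val) :=
  show (pathGraph n).Adj x.1 y.1 ↔ _ from pathGraph_adj

lemma walk_col_le {u v : Fin n × Bool} (p : (DG n).Walk u v) :
    Nat.dist u.1.val v.1.val ≤ p.length := by
  induction p with
  | nil => simp [Nat.dist_self]
  | @cons a b c h q ih =>
    have h1 : Nat.dist a.1.val b.1.val = 1 := by
      rcases dg_adj.mp h with h' | h' <;> simp [Nat.dist] <;> omega
    calc Nat.dist a.1.val c.1.val ≤ Nat.dist a.1.val b.1.val + Nat.dist b.1.val c.1.val :=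
          Nat.dist.triangle_inequality _ _ _
      _ ≤ 1 + q.length := by rw [h1]; omega
      _ = (SimpleGraph.Walk.cons h q).length := by simp [SimpleGraph.Walk.length_cons]; omega

lemma walk_passes {u v : Fin n × Bool} (p : (DG n).Walk u v) :
    ∀ m : ℕ, u.1.val ≤ m → m ≤ v.1.val → ∃ w ∈ p.support, w.1.val = m := by
  induction p with
  | nil => intro m h1 h2; exact ⟨_, SimpleGraph.Walk.start_mem_support _, by omega⟩
  | @cons a b c h q ih =>
    intro m h1 h2
    by_cases hm : a.1.val = m
    · exact ⟨a, by simp, hm⟩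
    · have hb : b.1.val ≤ m := by rcases dg_adj.mp h with h' | h' <;> omega
      obtain ⟨w, hw, hwm⟩ := ih m hb h2
      exact ⟨w, by simp [hw], hwm⟩

lemma exists_walk_true (k : ℕ) : ∀ (u v : Fin n × Bool), 1 ≤ k → u.1.val + k = v.1.val →
    ∃ w : (DG n).Walk u v, w.length = k ∧
      ∀ z ∈ w.support, z = u ∨ z = v ∨
        (z.2 = true ∧ u.1.val < z.1.val ∧ z.1.val < v.1.val) := by
  induction k with
  | zero => omega
  | succ k ih =>
    intro u v _ hsum
    by_cases hk : k = 0
    · subst hk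
      have hadj : (DG n).Adj u v := dg_adj.mpr (Or.inl (by omega))
      refine ⟨SimpleGraph.Walk.cons hadj .nil, by simp, ?_⟩
      intro z hz
      simp [SimpleGraph.Walk.support_cons] at hz
      rcases hz with rfl | rfl
      · exact Or.inl rfl
      · exact Or.inr (Or.inl rfl)
    · have hvn : v.1.val < n := v.1.isLt
      set u' : Fin n × Bool := (⟨u.1.val + 1, by omega⟩, true) with hu'
      have hadj : (DG n).Adj u u' := dg_adj.mpr (Or.inl rfl)
      obtain ⟨w', hlen, hsupp⟩ := ih u' v (by omega) (by simp [hu']; omega)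
      refine ⟨SimpleGraph.Walk.cons hadj w', by simp [hlen], ?_⟩
      intro z hz
      rw [SimpleGraph.Walk.support_cons, List.mem_cons] at hz
      rcases hz with rfl | hz
      · exact Or.inl rfl
      rcases hsupp z hz with rfl | rfl | ⟨ht, hl, hr⟩
      · exact Or.inr (Or.inr ⟨rfl, by simp [hu'], by simp [hu']; omega⟩)
      · exact Or.inr (Or.inl rfl)
      · exact Or.inr (Or.inr ⟨ht, by simp [hu'] at hl; omega, hr⟩)

lemma dg_dist {u v : Fin n × Bool} (hlt : u.1.val < v.1.val) :
    (DG n).dist u v = v.1.val - u.1.val := by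
  obtain ⟨w, hlen, -⟩ := exists_walk_true (v.1.val - u.1.val) u v (by omega) (by omega)
  refine le_antisymm (hlen ▸ SimpleGraph.dist_le w) ?_
  obtain ⟨p, hp⟩ := (SimpleGraph.Reachable.exists_walk_length_eq_dist ⟨w⟩ : _)
  have := walk_col_le p
  rw [hp] at this
  simp [Nat.dist] at this
  omega

lemma svisible_of_walk {S : Set (Fin n × Bool)} {u v : Fin n × Bool}
    (w : (DG n).Walk u v) (hw : w.length = (DG n).dist u v)
    (hs : ∀ z ∈ w.support, z ≠ u → z ≠ v → z ∉ S) : (DG n).SVisible S u v := by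
  classical
  refine ⟨w.bypass, ⟨w.bypass_isPath, le_antisymm ?_ (SimpleGraph.dist_le _)⟩,
    fun z hz => hs z (w.support_bypass_subset hz)⟩
  exact hw ▸ w.length_bypass_le

lemma svisible_symm {V : Type*} {G : SimpleGraph V} {S : Set V} {u v : V}
    (h : G.SVisible S u v) : G.SVisible S v u := by
  obtain ⟨p, ⟨hp, hl⟩, hs⟩ := h
  exact ⟨p.reverse,
    ⟨hp.reverse, by rw [SimpleGraph.Walk.length_reverse, hl, SimpleGraph.dist_comm]⟩,
    fun z hz h1 h2 => hs z (by simpa [SimpleGraph.Walk.support_reverse] using hz) h2 h1⟩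

/-- The candidate mutual-visibility set: both copies of the endpoints, and the
false copy of each internal vertex. -/
def SP (n : ℕ) : Finset (Fin n × Bool) :=
  Finset.univ.filter (fun z => z.1.val = 0 ∨ z.1.val = n - 1 ∨ z.2 = false)

lemma mem_SP {z : Fin n × Bool} :
    z ∈ SP n ↔ (z.1.val = 0 ∨ z.1.val = n - 1 ∨ z.2 = false) := by
  simp [SP]

lemma vis_lt {u v : Fin n × Bool} (hlt : u.1.val < v.1.val) :
    (DG n).SVisible (↑(SP n)) u v := by
  obtain ⟨w, hlen, hsupp⟩ := exists_walk_true (v.1.val - u.1.val) u v (by omega) (by omega)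
  apply svisible_of_walk w (by rw [dg_dist hlt, hlen])
  intro z hz hzu hzv
  rcases hsupp z hz with rfl | rfl | ⟨ht, hl, hr⟩
  · exact absurd rfl hzu
  · exact absurd rfl hzv
  · rw [Finset.mem_coe, mem_SP]
    push_neg
    have := v.1.isLt
    exact ⟨by omega, by omega, by simp [ht]⟩

lemma vis_eq (hn : 3 ≤ n) {u v : Fin n × Bool} (hcol : u.1 = v.1) (hne : u ≠ v)
    (hor : u.1.val = 0 ∨ u.1.val = n - 1) : (DG n).SVisible (↑(SP n)) u v := by
  obtain ⟨m, hadj1, hadj2, hm1, hm2, hm3⟩ :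
      ∃ m : Fin n × Bool, (DG n).Adj u m ∧ (DG n).Adj m v ∧ m.2 = true ∧
        m.1.val ≠ 0 ∧ m.1.val ≠ n - 1 := by
    rcases hor with h0 | h1
    · refine ⟨(⟨1, by omega⟩, true), dg_adj.mpr (Or.inl (by simp; omega)),
        dg_adj.mpr (Or.inr (by simp [← hcol]; omega)), rfl, by simp, by simp; omega⟩
    · refine ⟨(⟨n - 2, by omega⟩, true), dg_adj.mpr (Or.inr (by simp; omega)),
        dg_adj.mpr (Or.inl (by simp [← hcol]; omega)), rfl, by simp; omega, by simp; omega⟩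
  set w : (DG n).Walk u v := SimpleGraph.Walk.cons hadj1 (SimpleGraph.Walk.cons hadj2 .nil)
    with hwdef
  have hwlen : w.length = 2 := by simp [hwdef]
  have hle : (DG n).dist u v ≤ 2 := hwlen ▸ SimpleGraph.dist_le w
  have hne0 : (DG n).dist u v ≠ 0 :=
    SimpleGraph.dist_ne_zero_iff_ne_and_reachable.mpr ⟨hne, ⟨w⟩⟩
  have hne1 : (DG n).dist u v ≠ 1 := by
    intro h
    have := dg_adj.mp (SimpleGraph.dist_eq_one_iff_adj.mp h)
    rw [hcol] at this
    omega
  apply svisible_of_walk w (by omega)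
  intro z hz hzu hzv
  have hzm : z = m := by
    simp [hwdef, SimpleGraph.Walk.support_cons] at hz
    rcases hz with rfl | rfl | rfl
    · exact absurd rfl hzu
    · rfl
    · exact absurd rfl hzv
  subst hzm
  rw [Finset.mem_coe, mem_SP]
  push_neg
  exact ⟨hm2, hm3, by simp [hm1]⟩

lemma SP_mv (hn : 3 ≤ n) : (DG n).IsMVSet ↑(SP n) := by
  intro u hu v hv hne
  rcases Nat.lt_trichotomy u.1.val v.1.val with h | h | h
  · exact vis_lt h
  · have hcol : u.1 = v.1 := Fin.ext h
    rw [Finset.mem_coe, mem_SP] at hu hv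
    have hor : u.1.val = 0 ∨ u.1.val = n - 1 := by
      rcases hu with h0 | h1 | hf
      · exact Or.inl h0
      · exact Or.inr h1
      · have hvt : v.2 = true := by
          by_contra hvb
          exact hne (Prod.ext hcol (by revert hf hvb; cases u.2 <;> cases v.2 <;> simp))
        rcases hv with h0 | h1 | hf'
        · exact Or.inl (by omega)
        · exact Or.inr (by omega)
        · rw [hvt] at hf'; exact absurd hf' (by simp)
    exact vis_eq hn hcol hne hor
  · exact svisible_symm (vis_lt h)

lemma SP_card (hn : 3 ≤ n) : (SP n).card = n + 2 := by
  classical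
  have hsplit := Finset.card_filter_add_card_filter_not
    (s := (Finset.univ : Finset (Fin n × Bool)))
    (p := fun z => z.1.val = 0 ∨ z.1.val = n - 1 ∨ z.2 = false)
  have himg : Finset.univ.filter
        (fun z : Fin n × Bool => ¬(z.1.val = 0 ∨ z.1.val = n - 1 ∨ z.2 = false))
      = (Finset.univ.filter (fun i : Fin n => ¬(i.val = 0 ∨ i.val = n - 1))).image
          (fun i => (i, true)) := by
    ext ⟨i, b⟩
    cases b <;> simp [Prod.ext_iff]
  have hinj : Function.Injective (fun i : Fin n => (i, true)) := by
    intro a b h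
    simpa using congrArg Prod.fst h
  have hQsplit := Finset.card_filter_add_card_filter_not
    (s := (Finset.univ : Finset (Fin n))) (p := fun i => i.val = 0 ∨ i.val = n - 1)
  have hQ : Finset.univ.filter (fun i : Fin n => i.val = 0 ∨ i.val = n - 1)
      = {(⟨0, by omega⟩ : Fin n), ⟨n - 1, by omega⟩} := by
    ext i
    simp [Fin.ext_iff]
  have hQcard : (Finset.univ.filter (fun i : Fin n => i.val = 0 ∨ i.val = n - 1)).card = 2 := by
    rw [hQ]
    rw [Finset.card_insert_of_notMem (by simp [Fin.ext_iff]; omega), Finset.card_singleton]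
  have hcardprod : (Finset.univ : Finset (Fin n × Bool)).card = 2 * n := by
    simp [Finset.card_univ, Nat.mul_comm]
  have hcardfin : (Finset.univ : Finset (Fin n)).card = n := by simp
  rw [himg, Finset.card_image_of_injective _ hinj] at hsplit
  have : (SP n).card = (Finset.univ.filter
      (fun z : Fin n × Bool => z.1.val = 0 ∨ z.1.val = n - 1 ∨ z.2 = false)).card := rfl
  omega

lemma blocked {S : Finset (Fin n × Bool)} (hMV : (DG n).IsMVSet ↑S) {i : Fin n}
    (hif : (i, false) ∈ S) (hit : (i, true) ∈ S) {u v : Fin n × Bool}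
    (hu : u ∈ S) (hv : v ∈ S) (hui : u.1.val < i.val) (hvi : i.val < v.1.val) : False := by
  have hne : u ≠ v := fun h => by rw [h] at hui; omega
  obtain ⟨p, -, hp⟩ := hMV u (Finset.mem_coe.mpr hu) v (Finset.mem_coe.mpr hv) hne
  obtain ⟨z, hz, hcol⟩ := walk_passes p i.val (by omega) (by omega)
  have hz1 : z.1 = i := Fin.ext hcol
  have hzu : z ≠ u := fun h => by rw [h] at hcol; omega
  have hzv : z ≠ v := fun h => by rw [h] at hcol; omega
  apply hp z hz hzu hzv
  rw [Finset.mem_coe]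
  have hz2 : z = (i, z.2) := Prod.ext hz1 rfl
  rw [hz2]
  cases z.2
  · exact hif
  · exact hit

lemma fiber_le {S : Finset (Fin n × Bool)} (c : Fin n) :
    (S.filter (fun z => z.1 = c)).card ≤
      1 + (if (c, false) ∈ S ∧ (c, true) ∈ S then 1 else 0) := by
  classical
  split_ifs with h
  · have hsub : S.filter (fun z => z.1 = c) ⊆ {(c, false), (c, true)} := by
      intro z hz
      rw [Finset.mem_filter] at hz
      have hz2 : z = (c, z.2) := Prod.ext hz.2 rfl
      rw [hz2]
      cases z.2 <;> simp
    calc (S.filter (fun z => z.1 = c)).card ≤ ({(c, false), (c, true)} : Finset _).card :=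
          Finset.card_le_card hsub
      _ = 2 := Finset.card_pair (by simp)
  · have h1 : (S.filter (fun z => z.1 = c)).card ≤ 1 := by
      apply Finset.card_le_one.mpr
      intro a ha b hb
      rw [Finset.mem_filter] at ha hb
      have ha2 : a = (c, a.2) := Prod.ext ha.2 rfl
      have hb2 : b = (c, b.2) := Prod.ext hb.2 rfl
      rw [ha2] at ha ⊢; rw [hb2] at hb ⊢
      cases ha' : a.2 <;> cases hb' : b.2 <;> rw [ha'] at ha <;> rw [hb'] at hb <;>
        simp_all
    omega

lemma card_le_main (hn : 3 ≤ n) {S : Finset (Fin n × Bool)}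
    (hMV : (DG n).IsMVSet ↑S) : S.card ≤ n + 2 := by
  classical
  set cols := S.image Prod.fst with hcolsdef
  set D := Finset.univ.filter (fun c : Fin n => (c, false) ∈ S ∧ (c, true) ∈ S) with hDdef
  have hDmem : ∀ c ∈ D, (c, false) ∈ S ∧ (c, true) ∈ S := by
    intro c hc; rw [hDdef, Finset.mem_filter] at hc; exact hc.2
  have hstep1 : S.card ≤ cols.card + D.card := by
    rw [Finset.card_eq_sum_card_fiberwise
      (fun x hx => Finset.mem_image_of_mem Prod.fst hx : ∀ x ∈ S, x.1 ∈ cols)]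
    calc ∑ c ∈ cols, (S.filter fun z => z.1 = c).card
        ≤ ∑ c ∈ cols, (1 + if (c, false) ∈ S ∧ (c, true) ∈ S then 1 else 0) :=
          Finset.sum_le_sum (fun c _ => fiber_le c)
      _ = cols.card + ∑ c ∈ cols, (if (c, false) ∈ S ∧ (c, true) ∈ S then 1 else 0) := by
          rw [Finset.sum_add_distrib, Finset.sum_const, smul_eq_mul, mul_one]
      _ ≤ cols.card + D.card := by
          rw [← Finset.card_filter]
          refine Nat.add_le_add_left (Finset.card_le_card ?_) _
          intro c hc
          rw [Finset.mem_filter] at hc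
          rw [hDdef, Finset.mem_filter]
          exact ⟨Finset.mem_univ _, hc.2⟩
  set Dint := D.filter (fun c => c.val ≠ 0 ∧ c.val ≠ n - 1) with hDintdef
  have hcols_le : ∀ {lo hi : Fin n}, (∀ z ∈ S, lo.val ≤ z.1.val ∧ z.1.val ≤ hi.val) →
      cols.card ≤ hi.val + 1 - lo.val := by
    intro lo hi hbound
    have hsub : cols ⊆ Finset.Icc lo hi := by
      intro c hc
      rw [hcolsdef, Finset.mem_image] at hc
      obtain ⟨z, hz, rfl⟩ := hc
      rw [Finset.mem_Icc, Fin.le_def, Fin.le_def]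
      exact hbound z hz
    calc cols.card ≤ (Finset.Icc lo hi).card := Finset.card_le_card hsub
      _ = hi.val + 1 - lo.val := Fin.card_Icc lo hi
  rcases Finset.eq_empty_or_nonempty Dint with hDe | hDne
  · -- no internal double column
    have hD2 : D ⊆ {(⟨0, by omega⟩ : Fin n), ⟨n - 1, by omega⟩} := by
      intro c hc
      by_contra hcn
      simp [Fin.ext_iff] at hcn
      have : c ∈ Dint := by
        rw [hDintdef, Finset.mem_filter]
        exact ⟨hc, hcn.1, hcn.2⟩
      rw [hDe] at this
      exact absurd this (Finset.notMem_empty _)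
    have hDcard : D.card ≤ 2 := by
      calc D.card ≤ _ := Finset.card_le_card hD2
        _ ≤ 2 := Finset.card_insert_le _ _ |>.trans (by simp)
    have hcolscard : cols.card ≤ n := by
      calc cols.card ≤ (Finset.univ : Finset (Fin n)).card := Finset.card_le_univ _
        _ = n := by simp
    omega
  · set i := Dint.min' hDne with hidef
    set j := Dint.max' hDne with hjdef
    have hiD : i ∈ Dint := Dint.min'_mem hDne
    have hjD : j ∈ Dint := Dint.max'_mem hDne
    have hiprop := Finset.mem_filter.mp hiD
    have hjprop := Finset.mem_filter.mp hjD
    have hiS := hDmem i hiprop.1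
    have hjS := hDmem j hjprop.1
    have hi0 : i.val ≠ 0 := hiprop.2.1
    have hin : i.val ≠ n - 1 := hiprop.2.2
    have hj0 : j.val ≠ 0 := hjprop.2.1
    have hjn : j.val ≠ n - 1 := hjprop.2.2
    have hivn : i.val < n := i.isLt
    have hjvn : j.val < n := j.isLt
    rcases Nat.lt_or_ge i.val j.val with hij | hij
    · -- two distinct internal doubles
      have hbelow : ∀ z ∈ S, i.val ≤ z.1.val := by
        intro z hz
        by_contra hlt
        exact blocked hMV hiS.1 hiS.2 hz hjS.1 (by omega) hij
      have habove : ∀ z ∈ S, z.1.val ≤ j.val := by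
        intro z hz
        by_contra hgt
        exact blocked hMV hjS.1 hjS.2 hiS.1 hz hij (by omega)
      have hD2 : D ⊆ {i, j} := by
        intro c hc
        have hcS := hDmem c hc
        have hc1 : i.val ≤ c.val := hbelow (c, false) hcS.1
        have hc2 : c.val ≤ j.val := habove (c, false) hcS.1
        by_contra hcn
        simp [Fin.ext_iff] at hcn
        exact blocked hMV hcS.1 hcS.2 hiS.1 hjS.1 (by show i.val < c.val; omega)
          (by show c.val < j.val; omega)
      have hDcard : D.card ≤ 2 :=
        (Finset.card_le_card hD2).trans (Finset.card_insert_le _ _ |>.trans (by simp))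
      have hcolscard : cols.card ≤ j.val + 1 - i.val :=
        hcols_le (fun z hz => ⟨hbelow z hz, habove z hz⟩)
      omega
    · -- unique internal double column i (= j)
      have huniq : ∀ c ∈ Dint, c = i := by
        intro c hc
        have h1 := Dint.min'_le c hc
        have h2 := Dint.le_max' c hc
        rw [← hidef] at h1
        rw [← hjdef] at h2
        rw [Fin.le_def] at h1 h2
        exact Fin.ext (by omega)
      by_cases hbelow : ∃ z ∈ S, z.1.val < i.val
      · obtain ⟨z0, hz0S, hz0⟩ := hbelow
        have habove : ∀ z ∈ S, z.1.val ≤ i.val := by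
          intro z hz
          by_contra hgt
          exact blocked hMV hiS.1 hiS.2 hz0S hz hz0 (by omega)
        have hD2 : D ⊆ {(⟨0, by omega⟩ : Fin n), i} := by
          intro c hc
          have hcS := hDmem c hc
          have hc2 : c.val ≤ i.val := habove (c, false) hcS.1
          by_contra hcn
          simp [Fin.ext_iff] at hcn
          have : c ∈ Dint := by
            rw [hDintdef, Finset.mem_filter]
            exact ⟨hc, hcn.1, by omega⟩
          exact hcn.2 (congrArg Fin.val (huniq c this))
        have hDcard : D.card ≤ 2 :=
          (Finset.card_le_card hD2).trans (Finset.card_insert_le _ _ |>.trans (by simp))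
        have hcolscard : cols.card ≤ i.val + 1 - (0 : ℕ) := by
          have := hcols_le (lo := ⟨0, by omega⟩) (hi := i)
            (fun z hz => ⟨by simp, habove z hz⟩)
          simpa using this
        omega
      · push_neg at hbelow
        have hD2 : D ⊆ {i, (⟨n - 1, by omega⟩ : Fin n)} := by
          intro c hc
          have hcS := hDmem c hc
          have hc1 : i.val ≤ c.val := hbelow (c, false) hcS.1
          by_contra hcn
          simp [Fin.ext_iff] at hcn
          have : c ∈ Dint := by
            rw [hDintdef, Finset.mem_filter]
            exact ⟨hc, by omega, hcn.2⟩
          exact hcn.1 (congrArg Fin.val (huniq c this))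
        have hDcard : D.card ≤ 2 :=
          (Finset.card_le_card hD2).trans (Finset.card_insert_le _ _ |>.trans (by simp))
        have hcolscard : cols.card ≤ (n - 1) + 1 - i.val := by
          have := hcols_le (lo := i) (hi := ⟨n - 1, by omega⟩)
            (fun z hz => ⟨hbelow z hz, by simp; omega⟩)
          simpa using this
        omega

end DPHelp

theorem mu_double_path (n : ℕ) (hn : 3 ≤ n) :
    (SimpleGraph.pathGraph n).doubleGraph.mutualVisibilityNumber = n + 2 := by
  classical
  have hmem : n + 2 ∈ {k | ∃ S : Finset (Fin n × Bool),
      (SimpleGraph.pathGraph n).doubleGraph.IsMVSet ↑S ∧ S.card = k} :=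
    ⟨DPHelp.SP n, DPHelp.SP_mv hn, DPHelp.SP_card hn⟩
  have hub : ∀ k ∈ {k | ∃ S : Finset (Fin n × Bool),
      (SimpleGraph.pathGraph n).doubleGraph.IsMVSet ↑S ∧ S.card = k}, k ≤ n + 2 := by
    rintro k ⟨S, hS, rfl⟩
    exact DPHelp.card_le_main hn hS
  exact le_antisymm (csSup_le ⟨_, hmem⟩ hub) (le_csSup ⟨n + 2, hub⟩ hmem)
end

section
/- For every connected graph G, gp(D(G)) = 2·gp(G) holds if and only if every gp-set of D(G) has the form X ∪ X' where X is an independent gp-set of G. -/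
open SimpleGraph

variable {V : Type*}

namespace GPAux
open SimpleGraph
variable {V : Type*} (G : SimpleGraph V)

def projHom : G.doubleGraph →g G := ⟨Prod.fst, fun h => h⟩

def liftHom (f : V → Bool) : G →g G.doubleGraph := ⟨fun v => (v, f v), fun h => h⟩

lemma liftHom_injective (f : V → Bool) : Function.Injective (liftHom G f) :=
  fun a b h => congrArg Prod.fst h

lemma dist_double (f : V → Bool) {u v : V} (h : G.Reachable u v) :
    G.doubleGraph.dist (u, f u) (v, f v) = G.dist u v := by
  obtain ⟨p, hp⟩ := h.exists_walk_length_eq_dist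
  apply le_antisymm
  · calc G.doubleGraph.dist (u, f u) (v, f v) ≤ (p.map (liftHom G f)).length := dist_le _
      _ = G.dist u v := by rw [Walk.length_map, hp]
  · have hr : G.doubleGraph.Reachable (u, f u) (v, f v) := ⟨p.map (liftHom G f)⟩
    obtain ⟨q, hq⟩ := hr.exists_walk_length_eq_dist
    calc G.dist u v ≤ (q.map (projHom G)).length := dist_le _
      _ = _ := by rw [Walk.length_map, hq]

lemma lift_shortest (f : V → Bool) {u v : V} {p : G.Walk u v}
    (hp : G.IsShortestPath p) :
    G.doubleGraph.IsShortestPath (p.map (liftHom G f)) := by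
  refine ⟨Walk.map_isPath_of_injective (liftHom_injective G f) hp.1, ?_⟩
  rw [Walk.length_map, hp.2]
  exact (dist_double G f ⟨p⟩).symm

lemma proj_gpset [DecidableEq V] (S : Finset (V × Bool))
    (hS : G.doubleGraph.IsGPSet ↑S) :
    G.IsGPSet ↑(S.image Prod.fst) := by
  classical
  set f : V → Bool := fun w => if (w, true) ∈ S then true else false with hf
  have hmem : ∀ w : V, w ∈ (↑(S.image Prod.fst) : Set V) → ((w, f w) : V × Bool) ∈ (↑S : Set (V × Bool)) := by
    intro w hw
    obtain ⟨⟨w', b⟩, hwb, rfl⟩ := Finset.mem_image.mp (Finset.mem_coe.mp hw)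
    simp only [hf]
    by_cases h : ((w', true) : V × Bool) ∈ S
    · simpa [h] using h
    · cases b
      · simpa [h] using hwb
      · exact absurd hwb h
  intro u v p hp x hx y hy z hz hxy hxz hyz hsup
  obtain ⟨hxs, hys, hzs⟩ := hsup
  refine hS (p.map (liftHom G f)) (lift_shortest G f hp)
    (x, f x) (hmem x hx) (y, f y) (hmem y hy) (z, f z) (hmem z hz)
    (fun h => hxy (congrArg Prod.fst h)) (fun h => hxz (congrArg Prod.fst h))
    (fun h => hyz (congrArg Prod.fst h)) ?_
  rw [Walk.support_map]
  exact ⟨List.mem_map_of_mem hxs, List.mem_map_of_mem hys, List.mem_map_of_mem hzs⟩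

end GPAux


theorem gp_double_eq_iff [Fintype V] [DecidableEq V] (G : SimpleGraph V)
    (hconn : G.Connected) :
    G.doubleGraph.gpNumber = 2 * G.gpNumber ↔
      ∀ S : Finset (V × Bool), G.doubleGraph.IsGPSet ↑S →
        S.card = G.doubleGraph.gpNumber →
        ∃ X : Finset V, G.IsGPSet ↑X ∧ X.card = G.gpNumber ∧
          (∀ a ∈ X, ∀ b ∈ X, ¬ G.Adj a b) ∧ S = X ×ˢ Finset.univ := by
  classical
  constructor
  · intro heq S hS hcard
    set A := S.image Prod.fst with hA
    have hAgp : G.IsGPSet ↑A := GPAux.proj_gpset G S hS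
    have hbddG : BddAbove {k | ∃ T : Finset V, G.IsGPSet ↑T ∧ T.card = k} := by
      refine ⟨Fintype.card V, ?_⟩
      rintro k ⟨T, -, rfl⟩
      exact Finset.card_le_univ T
    have hAle : A.card ≤ G.gpNumber := le_csSup hbddG ⟨A, hAgp, rfl⟩
    have hsub : S ⊆ A ×ˢ Finset.univ := by
      rintro ⟨a, b⟩ hx
      exact Finset.mem_product.mpr ⟨Finset.mem_image_of_mem _ hx, Finset.mem_univ _⟩
    have hcard2 : (A ×ˢ (Finset.univ : Finset Bool)).card = A.card * 2 := by
      rw [Finset.card_product, Finset.card_univ, Fintype.card_bool]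
    have hS2 : S.card = 2 * G.gpNumber := by rw [hcard, heq]
    have hle : 2 * G.gpNumber ≤ A.card * 2 := by
      rw [← hS2, ← hcard2]
      exact Finset.card_le_card hsub
    have hAeq : A.card = G.gpNumber := by omega
    have hSeq : S = A ×ˢ Finset.univ :=
      Finset.eq_of_subset_of_card_le hsub (by omega)
    refine ⟨A, hAgp, hAeq, ?_, hSeq⟩
    intro a ha b hb hadj
    have hne : a ≠ b := G.ne_of_adj hadj
    have h1 : G.doubleGraph.Adj (a, false) (b, false) := hadj
    have h2 : G.doubleGraph.Adj (b, false) (a, true) := hadj.symm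
    set p : G.doubleGraph.Walk (a, false) (a, true) :=
      SimpleGraph.Walk.cons h1 (SimpleGraph.Walk.cons h2 SimpleGraph.Walk.nil) with hp
    have hpath : p.IsPath := by
      rw [hp, SimpleGraph.Walk.isPath_def]
      simp [SimpleGraph.Walk.support_cons, hne, Ne.symm hne]
    have hd : G.doubleGraph.dist (a, false) (a, true) = 2 := by
      have hle2 : G.doubleGraph.dist (a, false) (a, true) ≤ 2 := SimpleGraph.dist_le p
      have hr : G.doubleGraph.Reachable (a, false) (a, true) := ⟨p⟩
      have h0 : G.doubleGraph.dist (a, false) (a, true) ≠ 0 := fun hc =>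
        (show ((a, false) : V × Bool) ≠ (a, true) by simp) (hr.dist_eq_zero_iff.mp hc)
      have h1' : G.doubleGraph.dist (a, false) (a, true) ≠ 1 := by
        intro hc
        have hadj' : G.doubleGraph.Adj (a, false) (a, true) :=
          SimpleGraph.dist_eq_one_iff_adj.mp hc
        exact G.irrefl hadj'
      omega
    have hshort : G.doubleGraph.IsShortestPath p := ⟨hpath, by rw [hd]; rfl⟩
    have hmem : ∀ x : V, x ∈ A → ∀ c : Bool, ((x, c) : V × Bool) ∈ (↑S : Set (V × Bool)) := by
      intro x hx c
      rw [hSeq]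
      exact Finset.mem_coe.mpr (Finset.mem_product.mpr ⟨hx, Finset.mem_univ _⟩)
    exact hS p hshort (a, false) (hmem a ha false) (b, false) (hmem b hb false)
      (a, true) (hmem a ha true) (by simp [hne]) (by simp) (by simp)
      ⟨by simp [hp], by simp [hp], by simp [hp]⟩
  · intro h
    have hne : {k | ∃ S : Finset (V × Bool), G.doubleGraph.IsGPSet ↑S ∧ S.card = k}.Nonempty := by
      refine ⟨0, ∅, ?_, Finset.card_empty⟩
      intro u v p hp x hx
      simp at hx
    have hbdd : BddAbove {k | ∃ S : Finset (V × Bool), G.doubleGraph.IsGPSet ↑S ∧ S.card = k} := by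
      refine ⟨Fintype.card (V × Bool), ?_⟩
      rintro k ⟨T, -, rfl⟩
      exact Finset.card_le_univ T
    obtain ⟨S, hSgp, hScard⟩ := Nat.sSup_mem hne hbdd
    obtain ⟨X, -, hXcard, -, hSX⟩ := h S hSgp hScard
    calc G.doubleGraph.gpNumber = S.card := hScard.symm
      _ = X.card * 2 := by
          rw [hSX, Finset.card_product, Finset.card_univ, Fintype.card_bool]
      _ = 2 * G.gpNumber := by rw [hXcard]; ring
end

section
/- If G is connected, not complete, and diam(G) ≤ 3, then n(G) + μ_o(G) ≤ μ(M(G)) ≤ n(G) + μ(G) + 1; moreover, if μ(M(G)) = n(G) + μ(G) + 1, then every maximum mutual-visibility set of M(G) contains the vertex v*. -/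
open SimpleGraph

variable {V : Type*}

variable {G : SimpleGraph V}

@[simp] lemma myc_adj_ff {u v : V} :
    G.mycielskian.Adj (some (u,false)) (some (v,false)) ↔ G.Adj u v := Iff.rfl
@[simp] lemma myc_adj_ft {u v : V} :
    G.mycielskian.Adj (some (u,false)) (some (v,true)) ↔ G.Adj u v := Iff.rfl
@[simp] lemma myc_adj_tf {u v : V} :
    G.mycielskian.Adj (some (u,true)) (some (v,false)) ↔ G.Adj u v := Iff.rfl
@[simp] lemma myc_adj_tt {u v : V} :
    ¬ G.mycielskian.Adj (some (u,true)) (some (v,true)) := fun h => h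
@[simp] lemma myc_adj_tn {u : V} :
    G.mycielskian.Adj (some (u,true)) none := trivial
@[simp] lemma myc_adj_nt {u : V} :
    G.mycielskian.Adj none (some (u,true)) := trivial
@[simp] lemma myc_adj_fn {u : V} :
    ¬ G.mycielskian.Adj (some (u,false)) none := fun h => h
@[simp] lemma myc_adj_nf {u : V} :
    ¬ G.mycielskian.Adj none (some (u,false)) := fun h => h

lemma myc_adj_some {u v : V × Bool} (h : G.mycielskian.Adj (some u) (some v)) :
    G.Adj u.1 v.1 := by
  obtain ⟨u, _|_⟩ := u <;> obtain ⟨v, _|_⟩ := v <;> first | exact h | exact h.elim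

/-- Lift a G-walk into the false layer of the Mycielskian. -/
lemma myc_lift {u v : V} (q : G.Walk u v) :
    ∃ p : G.mycielskian.Walk (some (u,false)) (some (v,false)),
      p.length = q.length ∧
      p.support = q.support.map (fun w => some (w,false)) := by
  induction q with
  | nil => exact ⟨.nil, rfl, rfl⟩
  | cons h q ih =>
    obtain ⟨p, hl, hs⟩ := ih
    exact ⟨.cons (myc_adj_ff.mpr h) p, by simp [hl], by simp [hs]⟩

/-- Project an apex-free Mycielskian walk to a G-walk. -/
lemma myc_proj : ∀ {x y : Option (V × Bool)} (p : G.mycielskian.Walk x y),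
    (none ∉ p.support) → ∀ (u v : V × Bool), x = some u → y = some v →
      ∃ q : G.Walk u.1 v.1, q.length = p.length ∧
        ∀ w ∈ q.support, ∃ b, some (w, b) ∈ p.support := by
  intro x y p
  induction p with
  | nil =>
    rintro - u v rfl h
    cases h
    exact ⟨.nil, rfl, fun w hw => ⟨u.2, by simp_all⟩⟩
  | @cons a c b h q ih =>
    intro hn u v ha hb
    subst ha
    have hc : c ≠ none := by
      intro h0; subst h0
      exact hn (by simp)
    obtain ⟨w, rfl⟩ := Option.ne_none_iff_exists'.mp hc
    have hn' : none ∉ q.support := fun h0 => hn (by simp [h0])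
    obtain ⟨q', hl, hs⟩ := ih hn' w v rfl hb
    refine ⟨.cons (myc_adj_some h) q', by simp [hl], ?_⟩
    intro z hz
    rcases List.mem_cons.mp (by simpa using hz) with h0 | h0
    · subst h0
      exact ⟨u.2, by simp⟩
    · obtain ⟨b, hb'⟩ := hs z h0
      exact ⟨b, by simp [hb']⟩

lemma two_le_length_to_none {u : V} (p : G.mycielskian.Walk (some (u,false)) none) :
    2 ≤ p.length := by
  cases p with
  | cons h q =>
    cases q with
    | nil => exact absurd h (by simp)
    | cons h' q' => simp

lemma none_not_mem_of_short {u v : V}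
    (p : G.mycielskian.Walk (some (u,false)) (some (v,false))) (hl : p.length ≤ 3) :
    none ∉ p.support := by
  classical
  intro hn
  have h1 := two_le_length_to_none (p.takeUntil none hn)
  have h2 : 2 ≤ (p.dropUntil none hn).length := by
    have := two_le_length_to_none (p.dropUntil none hn).reverse
    simpa using this
  have := congrArg Walk.length (p.take_spec hn)
  rw [Walk.length_append] at this
  omega

lemma dist_false_false (hconn : G.Connected) (hd3 : ∀ a b : V, G.dist a b ≤ 3) (u v : V) :
    G.mycielskian.dist (some (u,false)) (some (v,false)) = G.dist u v := by
  obtain ⟨q, hq⟩ := hconn.exists_walk_length_eq_dist u v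
  obtain ⟨p, hpl, -⟩ := myc_lift q
  have hle : G.mycielskian.dist (some (u,false)) (some (v,false)) ≤ G.dist u v := by
    rw [← hq, ← hpl]; exact SimpleGraph.dist_le p
  refine le_antisymm hle ?_
  have hr : G.mycielskian.Reachable (some (u,false)) (some (v,false)) := ⟨p⟩
  obtain ⟨P, hP⟩ := hr.exists_walk_length_eq_dist
  have hnn : none ∉ P.support :=
    none_not_mem_of_short P (by rw [hP]; exact hle.trans (hd3 u v))
  obtain ⟨Q, hQl, -⟩ := myc_proj P hnn (u,false) (v,false) rfl rfl
  calc G.dist u v ≤ Q.length := SimpleGraph.dist_le Q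
    _ = P.length := hQl
    _ = _ := hP

section helpers
variable {W : Type*} {H : SimpleGraph W}

lemma walk_len2 {u v : W} (p : H.Walk u v) (h : p.length = 2) :
    ∃ w, H.Adj u w ∧ H.Adj w v ∧ p.support = [u, w, v] := by
  cases p with
  | nil => simp at h
  | cons h1 q =>
    cases q with
    | nil => simp at h
    | cons h2 q' =>
      cases q' with
      | nil => exact ⟨_, h1, h2, rfl⟩
      | cons h3 q'' => simp at h

lemma walk_len3 {u v : W} (p : H.Walk u v) (h : p.length = 3) :
    ∃ a b, H.Adj u a ∧ H.Adj a b ∧ H.Adj b v ∧ p.support = [u, a, b, v] := by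
  cases p with
  | nil => simp at h
  | cons h1 q =>
    obtain ⟨a, g1, g2, hs⟩ := walk_len2 q (by simp at h; omega)
    exact ⟨_, a, h1, g1, g2, by simp [hs]⟩

lemma dist_eq_two' {u v : W} (hne : u ≠ v) (hna : ¬ H.Adj u v)
    (p : H.Walk u v) (hp : p.length = 2) : H.dist u v = 2 := by
  have h1 : H.dist u v ≤ 2 := hp ▸ SimpleGraph.dist_le p
  have h2 : H.dist u v ≠ 0 := dist_ne_zero_iff_ne_and_reachable.mpr ⟨hne, ⟨p⟩⟩
  have h3 : H.dist u v ≠ 1 := fun h => hna (dist_eq_one_iff_adj.mp h)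
  omega

lemma dist_eq_three' {u v : W} (hne : u ≠ v) (hna : ¬ H.Adj u v)
    (hmid : ∀ w, ¬ (H.Adj u w ∧ H.Adj w v))
    (p : H.Walk u v) (hp : p.length = 3) : H.dist u v = 3 := by
  have h1 : H.dist u v ≤ 3 := hp ▸ SimpleGraph.dist_le p
  have h2 : H.dist u v ≠ 0 := dist_ne_zero_iff_ne_and_reachable.mpr ⟨hne, ⟨p⟩⟩
  have h3 : H.dist u v ≠ 1 := fun h => hna (dist_eq_one_iff_adj.mp h)
  have h4 : H.dist u v ≠ 2 := by
    intro h
    obtain ⟨q, hq⟩ := exists_walk_of_dist_ne_zero (by omega : H.dist u v ≠ 0)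
    obtain ⟨w, g1, g2, -⟩ := walk_len2 q (by omega)
    exact hmid w ⟨g1, g2⟩
  omega

lemma svisible_of_walk {S : Set W} {u v : W} (p : H.Walk u v) (hl : p.length = H.dist u v)
    (h : ∀ w ∈ p.support, w ≠ u → w ≠ v → w ∉ S) : H.SVisible S u v :=
  ⟨p, ⟨p.isPath_of_length_eq_dist hl, hl⟩, h⟩

lemma svisible_symm {S : Set W} {u v : W} (h : H.SVisible S u v) : H.SVisible S v u := by
  obtain ⟨p, ⟨hp, hl⟩, hc⟩ := h
  exact ⟨p.reverse, ⟨hp.reverse, by rw [Walk.length_reverse, hl, dist_comm]⟩,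
    fun w hw h1 h2 => hc w (by simpa using hw) h2 h1⟩

lemma exists_second {u v : W} (p : H.Walk u v) (hl : 1 ≤ p.length) :
    ∃ w, H.Adj u w ∧ w ∈ p.support := by
  cases p with
  | nil => simp at hl
  | cons h q => exact ⟨_, h, by simp⟩

lemma exists_nonadj (hnc : H ≠ ⊤) : ∃ a b : W, a ≠ b ∧ ¬ H.Adj a b := by
  by_contra h
  push_neg at h
  exact hnc (SimpleGraph.ext (by ext a b; exact ⟨fun hab => hab.ne, fun hab => h a b hab⟩))

end helpers

lemma exists_not_mem_of_outer {S : Finset V} (hconn : G.Connected) (hnc : G ≠ ⊤)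
    (hS : G.IsMVSet ↑S) : ∃ x : V, x ∉ S := by
  by_contra h
  push_neg at h
  obtain ⟨a, b, hab, hna⟩ := exists_nonadj hnc
  obtain ⟨p, ⟨hpp, hpl⟩, hc⟩ := hS a (h a) b (h b) hab
  have h2 : G.dist a b ≠ 1 := fun h' => hna (dist_eq_one_iff_adj.mp h')
  have h0 : G.dist a b ≠ 0 := dist_ne_zero_iff_ne_and_reachable.mpr ⟨hab, hconn a b⟩
  obtain ⟨w, hw, hws⟩ := exists_second p (by omega)
  have hwa : w ≠ a := hw.ne'
  have hwb : w ≠ b := fun h' => hna (h' ▸ hw)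
  exact (hc w hws hwa hwb) (h w)

lemma neighbor_outside {S : Finset V} (hconn : G.Connected) (hnc : G ≠ ⊤)
    (hS : G.IsOuterMVSet ↑S) : ∀ u ∈ S, ∃ w, G.Adj u w ∧ w ∉ S := by
  intro u hu
  obtain ⟨x, hx⟩ := exists_not_mem_of_outer hconn hnc hS.1
  by_cases hadj : G.Adj u x
  · exact ⟨x, hadj, hx⟩
  · have hne : u ≠ x := fun h => hx (h ▸ hu)
    obtain ⟨p, ⟨hpp, hpl⟩, hc⟩ := hS.2 u (by exact_mod_cast hu) x (by exact_mod_cast hx) hne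
    have h2 : G.dist u x ≠ 1 := fun h' => hadj (dist_eq_one_iff_adj.mp h')
    have h0 : G.dist u x ≠ 0 := dist_ne_zero_iff_ne_and_reachable.mpr ⟨hne, hconn u x⟩
    obtain ⟨w, hw, hws⟩ := exists_second p (by omega)
    have hwa : w ≠ u := hw.ne'
    have hwb : w ≠ x := fun h' => hadj (h' ▸ hw)
    exact ⟨w, hw, by exact_mod_cast hc w hws hwa hwb⟩

lemma lower_construction [Fintype V] [DecidableEq V] (hconn : G.Connected) (hnc : G ≠ ⊤)
    (hd3 : ∀ a b : V, G.dist a b ≤ 3) (S : Finset V) (hS : G.IsOuterMVSet ↑S) :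
    ∃ X : Finset (Option (V × Bool)), G.mycielskian.IsMVSet ↑X ∧
      X.card = Fintype.card V + S.card := by
  classical
  set X : Finset (Option (V × Bool)) :=
    (Finset.univ.image (fun u : V => some (u, true))) ∪
      (S.image (fun u : V => some (u, false))) with hX
  have hXf : ∀ z : V, (some (z, false) ∈ X ↔ z ∈ S) := by
    intro z; simp [hX]
  have hXn : (none : Option (V × Bool)) ∉ X := by simp [hX]
  have hcard : X.card = Fintype.card V + S.card := by
    rw [Finset.card_union_of_disjoint, Finset.card_image_of_injective,
      Finset.card_image_of_injective, Finset.card_univ]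
    · intro a b hab; simpa using hab
    · intro a b hab; simpa using hab
    · simp [Finset.disjoint_left]
  -- key: (u,false) with u ∈ S is visible from (v,true) for any v
  have key : ∀ u ∈ S, ∀ v : V, G.mycielskian.SVisible ↑X (some (u, false)) (some (v, true)) := by
    intro u hu v
    by_cases huv : u = v
    · subst huv
      obtain ⟨w, hw, hwS⟩ := neighbor_outside hconn hnc hS u hu
      let p2 : G.mycielskian.Walk (some (u, false)) (some (u, true)) :=
        .cons (myc_adj_ff.mpr hw) (.cons (myc_adj_ft.mpr hw.symm) .nil)
      have hl2 : p2.length = 2 := rfl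
      refine svisible_of_walk p2 (by rw [dist_eq_two' (by simp) (by simp) p2 hl2]; rfl) ?_
      intro z hz h1 h2
      simp only [p2, Walk.support_cons, Walk.support_nil, List.mem_cons,
        List.not_mem_nil, or_false] at hz
      rcases hz with rfl | rfl | rfl
      · exact absurd rfl h1
      · intro h; exact hwS ((hXf _).mp (by exact_mod_cast h))
      · exact absurd rfl h2
    by_cases hadj : G.Adj u v
    · let p1 : G.mycielskian.Walk (some (u, false)) (some (v, true)) :=
        .cons (myc_adj_ft.mpr hadj) .nil
      have hl1 : p1.length = 1 := rfl
      refine svisible_of_walk p1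
        (by rw [dist_eq_one_iff_adj.mpr (myc_adj_ft.mpr hadj)]; exact hl1) ?_
      intro z hz h1 h2
      simp only [p1, Walk.support_cons, Walk.support_nil, List.mem_cons,
        List.not_mem_nil, or_false] at hz
      rcases hz with rfl | rfl
      · exact absurd rfl h1
      · exact absurd rfl h2
    -- distance ≥ 2 in G
    have hvis : G.SVisible ↑S u v := by
      by_cases hv : v ∈ S
      · exact hS.1 u (by exact_mod_cast hu) v (by exact_mod_cast hv) huv
      · exact hS.2 u (by exact_mod_cast hu) v (by exact_mod_cast hv) huv
    obtain ⟨q, ⟨hqp, hql⟩, hqc⟩ := hvis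
    have h0 : G.dist u v ≠ 0 := dist_ne_zero_iff_ne_and_reachable.mpr ⟨huv, hconn u v⟩
    have h1 : G.dist u v ≠ 1 := fun h' => hadj (dist_eq_one_iff_adj.mp h')
    have h3 : G.dist u v ≤ 3 := hd3 u v
    interval_cases hd : G.dist u v
    · omega
    · omega
    · -- dist = 2
      obtain ⟨w, g1, g2, hsup⟩ := walk_len2 q (by omega)
      have hwS : w ∉ S := by
        have := hqc w (by simp [hsup]) g1.ne' (fun h' => hadj (h' ▸ g1))
        exact_mod_cast this
      let p2 : G.mycielskian.Walk (some (u, false)) (some (v, true)) :=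
        .cons (myc_adj_ff.mpr g1) (.cons (myc_adj_ft.mpr g2) .nil)
      have hl2 : p2.length = 2 := rfl
      refine svisible_of_walk p2
        (by rw [dist_eq_two' (by simp [huv]) (by simpa using hadj) p2 hl2]; exact hl2) ?_
      intro z hz e1 e2
      simp only [p2, Walk.support_cons, Walk.support_nil, List.mem_cons,
        List.not_mem_nil, or_false] at hz
      rcases hz with rfl | rfl | rfl
      · exact absurd rfl e1
      · intro h; exact hwS ((hXf _).mp (by exact_mod_cast h))
      · exact absurd rfl e2
    · -- dist = 3
      obtain ⟨a, b, g1, g2, g3, hsup⟩ := walk_len3 q (by omega)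
      have hnodup := hqp.support_nodup
      rw [hsup] at hnodup
      simp only [List.nodup_cons, List.mem_cons, List.not_mem_nil] at hnodup
      have haS : a ∉ S := by
        have := hqc a (by simp [hsup]) g1.ne' (by tauto)
        exact_mod_cast this
      have hbS : b ∉ S := by
        have := hqc b (by simp [hsup]) (by tauto) g3.ne
        exact_mod_cast this
      have hmid : ∀ m, ¬ (G.mycielskian.Adj (some (u,false)) m ∧
          G.mycielskian.Adj m (some (v,true))) := by
        rintro (_ | ⟨w, _ | _⟩) ⟨m1, m2⟩
        · exact m1
        · have hle2 : G.dist u v ≤ 2 :=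
            SimpleGraph.dist_le
              (Walk.cons (myc_adj_ff.mp m1) (Walk.cons (myc_adj_ft.mp m2) Walk.nil))
          omega
        · exact m2
      let p3 : G.mycielskian.Walk (some (u, false)) (some (v, true)) :=
        .cons (myc_adj_ff.mpr g1) (.cons (myc_adj_ff.mpr g2) (.cons (myc_adj_ft.mpr g3) .nil))
      have hl3 : p3.length = 3 := rfl
      refine svisible_of_walk p3
        (by rw [dist_eq_three' (by simp) (by simpa using hadj) hmid p3 hl3]; exact hl3) ?_
      intro z hz e1 e2
      simp only [p3, Walk.support_cons, Walk.support_nil, List.mem_cons,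
        List.not_mem_nil, or_false] at hz
      rcases hz with rfl | rfl | rfl | rfl
      · exact absurd rfl e1
      · intro h; exact haS ((hXf _).mp (by exact_mod_cast h))
      · intro h; exact hbS ((hXf _).mp (by exact_mod_cast h))
      · exact absurd rfl e2
  refine ⟨X, ?_, hcard⟩
  rintro x hx y hy hne
  have hx' : x ∈ X := hx
  have hy' : y ∈ X := hy
  have hform : ∀ z ∈ X, ∃ (w : V) (b : Bool), z = some (w, b) ∧ (b = false → w ∈ S) := by
    intro z hz
    simp only [hX, Finset.mem_union, Finset.mem_image, Finset.mem_univ, true_and] at hz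
    rcases hz with ⟨w, hw⟩ | ⟨w, hwS, hw⟩
    · exact ⟨w, true, hw.symm, by simp⟩
    · exact ⟨w, false, hw.symm, fun _ => hwS⟩
  obtain ⟨a, ba, rfl, hba⟩ := hform x hx'
  obtain ⟨c, bc, rfl, hbc⟩ := hform y hy'
  cases ba <;> cases bc
  · -- false false
    have hac : a ≠ c := by simpa using hne
    obtain ⟨q, ⟨hqp, hql⟩, hqc⟩ :=
      hS.1 a (by exact_mod_cast hba rfl) c (by exact_mod_cast hbc rfl) hac
    obtain ⟨p, hpl, hps⟩ := myc_lift q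
    refine svisible_of_walk p (by rw [hpl, hql, dist_false_false hconn hd3]) ?_
    intro z hz e1 e2
    rw [hps, List.mem_map] at hz
    obtain ⟨w, hwq, rfl⟩ := hz
    have hwa : w ≠ a := fun h => e1 (by rw [h])
    have hwc : w ≠ c := fun h => e2 (by rw [h])
    have := hqc w hwq hwa hwc
    intro h
    exact (by exact_mod_cast this : w ∉ S) ((hXf w).mp (by exact_mod_cast h))
  · -- false true
    exact key a (hba rfl) c
  · -- true false
    exact svisible_symm (key c (hbc rfl) a)
  · -- true true
    have hac : a ≠ c := by simpa using hne
    let p2 : G.mycielskian.Walk (some (a, true)) (some (c, true)) :=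
      .cons (myc_adj_tn (u := a)) (.cons (myc_adj_nt (u := c)) .nil)
    have hl2 : p2.length = 2 := rfl
    refine svisible_of_walk p2
      (by rw [dist_eq_two' (by simpa using hac) myc_adj_tt p2 hl2]; exact hl2) ?_
    intro z hz e1 e2
    simp only [p2, Walk.support_cons, Walk.support_nil, List.mem_cons,
      List.not_mem_nil, or_false] at hz
    rcases hz with rfl | rfl | rfl
    · exact absurd rfl e1
    · exact fun h => hXn (by exact_mod_cast h)
    · exact absurd rfl e2

lemma upper_counting [Fintype V] [DecidableEq V] (hconn : G.Connected)
    (hd3 : ∀ a b : V, G.dist a b ≤ 3) (X : Finset (Option (V × Bool)))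
    (hX : G.mycielskian.IsMVSet ↑X) :
    ∃ T : Finset V, G.IsMVSet ↑T ∧
      X.card ≤ Fintype.card V + T.card + (if none ∈ X then 1 else 0) := by
  classical
  set A : Finset V := Finset.univ.filter (fun u => some (u, false) ∈ X) with hA
  set B : Finset V := Finset.univ.filter (fun u => some (u, true) ∈ X) with hB
  refine ⟨A ∩ B, ?_, ?_⟩
  · -- A ∩ B is a mutual-visibility set of G
    intro u hu v hv huv
    have hu' : u ∈ A ∩ B := by exact_mod_cast hu
    have hv' : v ∈ A ∩ B := by exact_mod_cast hv
    simp only [hA, hB, Finset.mem_inter, Finset.mem_filter, Finset.mem_univ, true_and] at hu' hv'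
    obtain ⟨P, ⟨hPp, hPl⟩, hPc⟩ := hX (some (u, false)) (by exact_mod_cast hu'.1)
      (some (v, false)) (by exact_mod_cast hv'.1) (by simp [huv])
    rw [dist_false_false hconn hd3] at hPl
    have hnn : none ∉ P.support :=
      none_not_mem_of_short P (by rw [hPl]; exact hd3 u v)
    obtain ⟨Q, hQl, hQs⟩ := myc_proj P hnn (u, false) (v, false) rfl rfl
    have hQdist : Q.length = G.dist u v := by rw [hQl, hPl]
    have hbl : Q.bypass.length = G.dist u v := by
      have h1 : G.dist u v ≤ Q.bypass.length := SimpleGraph.dist_le Q.bypass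
      have h2 := Q.length_bypass_le
      omega
    refine ⟨Q.bypass, ⟨Q.bypass_isPath, hbl⟩, ?_⟩
    intro w hw e1 e2
    have hwQ : w ∈ Q.support := Q.support_bypass_subset hw
    obtain ⟨b, hb⟩ := hQs w hwQ
    have hbX : some (w, b) ∉ X := by
      have := hPc (some (w, b)) hb (by simp [e1]) (by simp [e2])
      exact_mod_cast this
    intro hmem
    have : w ∈ A ∩ B := by exact_mod_cast hmem
    simp only [hA, hB, Finset.mem_inter, Finset.mem_filter, Finset.mem_univ, true_and] at this
    cases b
    · exact hbX this.1
    · exact hbX this.2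
  · -- cardinality bound
    have hsub : X ⊆ insert none
        ((A.image (fun u => some (u, false))) ∪ (B.image (fun u => some (u, true)))) := by
      intro z hz
      match z with
      | none => exact Finset.mem_insert_self _ _
      | some (w, false) =>
        refine Finset.mem_insert_of_mem (Finset.mem_union_left _ ?_)
        exact Finset.mem_image_of_mem _ (by simp [hA, hz])
      | some (w, true) =>
        refine Finset.mem_insert_of_mem (Finset.mem_union_right _ ?_)
        exact Finset.mem_image_of_mem _ (by simp [hB, hz])
    have hAB : A.card + B.card = (A ∪ B).card + (A ∩ B).card :=
      (Finset.card_union_add_card_inter A B).symm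
    have hABle : (A ∪ B).card ≤ Fintype.card V := Finset.card_le_univ _
    have himg : ((A.image (fun u => some (u, false))) ∪
        (B.image (fun u => some (u, true)))).card ≤ A.card + B.card := by
      refine (Finset.card_union_le _ _).trans ?_
      gcongr <;> exact Finset.card_image_le
    by_cases hn : none ∈ X
    · have h1 : X.card ≤ ((A.image (fun u => some (u, false))) ∪
          (B.image (fun u => some (u, true)))).card + 1 :=
        (Finset.card_le_card hsub).trans (Finset.card_insert_le _ _)
      simp only [hn, if_true]
      omega
    · have hsub' : X ⊆ ((A.image (fun u => some (u, false))) ∪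
          (B.image (fun u => some (u, true)))) := by
        intro z hz
        have := hsub hz
        rcases Finset.mem_insert.mp this with rfl | h
        · exact absurd hz hn
        · exact h
      have h1 := Finset.card_le_card hsub'
      simp only [hn, if_false]
      omega

theorem mu_mycielskian_diam3 [Fintype V] (G : SimpleGraph V) (hconn : G.Connected)
    (hnc : G ≠ ⊤) (hdiam : G.diam ≤ 3) :
    (Fintype.card V + G.outerMutualVisibilityNumber ≤ G.mycielskian.mutualVisibilityNumber ∧
      G.mycielskian.mutualVisibilityNumber ≤ Fintype.card V + G.mutualVisibilityNumber + 1) ∧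
    (G.mycielskian.mutualVisibilityNumber = Fintype.card V + G.mutualVisibilityNumber + 1 →
      ∀ S : Finset (Option (V × Bool)), G.mycielskian.IsMVSet ↑S →
        S.card = G.mycielskian.mutualVisibilityNumber → none ∈ S) := by
  classical
  have hNe : Nonempty V := hconn.nonempty
  have hd3 : ∀ a b : V, G.dist a b ≤ 3 := by
    obtain ⟨a0, b0, he⟩ := exists_edist_eq_ediam_of_finite (G := G)
    have hnt : G.ediam ≠ ⊤ := fun h =>
      (edist_ne_top_iff_reachable.mpr (hconn a0 b0)) (he.trans h)
    exact fun a b => (dist_le_diam hnt).trans hdiam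
  -- boundedness and nonemptiness of the three sSup sets
  have bddG : BddAbove {k | ∃ S : Finset V, G.IsMVSet ↑S ∧ S.card = k} :=
    ⟨Fintype.card V, by rintro k ⟨S, -, rfl⟩; exact S.card_le_univ⟩
  have bddO : BddAbove {k | ∃ S : Finset V, G.IsOuterMVSet ↑S ∧ S.card = k} :=
    ⟨Fintype.card V, by rintro k ⟨S, -, rfl⟩; exact S.card_le_univ⟩
  have bddM : BddAbove {k | ∃ S : Finset (Option (V × Bool)),
      G.mycielskian.IsMVSet ↑S ∧ S.card = k} :=
    ⟨Fintype.card (Option (V × Bool)), by rintro k ⟨S, -, rfl⟩; exact S.card_le_univ⟩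
  have neO : {k | ∃ S : Finset V, G.IsOuterMVSet ↑S ∧ S.card = k}.Nonempty :=
    ⟨0, ∅, ⟨fun u hu => absurd hu (by simp), fun u hu => absurd hu (by simp)⟩,
      Finset.card_empty⟩
  have neM : {k | ∃ S : Finset (Option (V × Bool)),
      G.mycielskian.IsMVSet ↑S ∧ S.card = k}.Nonempty :=
    ⟨0, ∅, fun u hu => absurd hu (by simp), Finset.card_empty⟩
  have hupper : ∀ X : Finset (Option (V × Bool)), G.mycielskian.IsMVSet ↑X →
      X.card ≤ Fintype.card V + G.mutualVisibilityNumber + (if none ∈ X then 1 else 0) := by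
    intro X hX
    obtain ⟨T, hT, hle⟩ := upper_counting hconn hd3 X hX
    have hTle : T.card ≤ G.mutualVisibilityNumber := le_csSup bddG ⟨T, hT, rfl⟩
    omega
  refine ⟨⟨?_, ?_⟩, ?_⟩
  · -- lower bound
    obtain ⟨S, hS, hScard⟩ : ∃ S : Finset V, G.IsOuterMVSet ↑S ∧
        S.card = G.outerMutualVisibilityNumber := Nat.sSup_mem neO bddO
    obtain ⟨X, hXmv, hXcard⟩ := lower_construction hconn hnc hd3 S hS
    exact le_csSup bddM ⟨X, hXmv, by rw [hXcard, hScard]⟩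
  · -- upper bound
    refine csSup_le neM ?_
    rintro k ⟨X, hX, rfl⟩
    have := hupper X hX
    split_ifs at this <;> omega
  · -- extremal case
    intro heq X hX hcard
    by_contra hnone
    have := hupper X hX
    rw [if_neg hnone, hcard, heq] at this
    omega
end
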